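/- In the dual-opinion scalar system with 2/(φ·(h-1)+2) < b < 1, suppose there exists T > 0 such that x̂(φ,h,b) ≤ x(t) < x̂(1,h,b) for all t ≥ T. Then there exists 𝒯 > T such that x and y are each monotone on {t : t ≥ 𝒯}, and lim_{t→∞} x(t) = x̂(φ,h,b) and lim_{t→∞} y(t) = (φ·(h+1)·x̂(φ,h,b) + 1 - φ)/(φ·h + 2 - φ). -/

import Mathlib

open Filter Topology

/-- Aggregate explicit opinion received from the in-group side:
`A(y) = h·y + 1 - y`. -/
noncomputable def A (h y : ℝ) : ℝ := h * y + 1 - y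

/-- Aggregate explicit opinion received from the out-group side:
`B(y) = y + h·(1 - y)`. -/
noncomputable def B (h y : ℝ) : ℝ := y + h * (1 - y)

/-- The function `g(x,b)` of the paper, for `b ∈ (0,1)`:
`g(x,b) = (x^{1-b} - (1-x)^{1-b}) / (x·(1-x)^{1-b} - (1-x)·x^{1-b})` for
`x ∈ (1/2,1)` and `g(1/2,b) = 2/b - 2`. -/
noncomputable def g (x b : ℝ) : ℝ :=
  if x = 1 / 2 then 2 / b - 2
  else (x ^ (1 - b) - (1 - x) ^ (1 - b)) /
    (x * (1 - x) ^ (1 - b) - (1 - x) * x ^ (1 - b))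

private lemma omega_unique {b C : ℝ} (hb0 : 0 < b) (hb1 : b < 1) (hC : 2 - b < C * b)
    {a a' : ℝ} (ha : 1 < a) (ha' : 1 < a')
    (h0 : a + C - C * a ^ b - a ^ (b - 1) = 0)
    (h0' : a' + C - C * a' ^ b - a' ^ (b - 1) = 0) : a = a' := by
  have hCpos : 0 < C := by nlinarith
  set f : ℝ → ℝ := fun r => r + C - C * r ^ b - r ^ (b - 1) with hf
  have hd1 : ∀ r : ℝ, 0 < r → HasDerivAt f (1 - C * (b * r ^ (b - 1)) - (b - 1) * r ^ (b - 1 - 1)) r := by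
    intro r hr
    have h1 : HasDerivAt (fun r : ℝ => r ^ b) (b * r ^ (b - 1)) r :=
      Real.hasDerivAt_rpow_const (Or.inl hr.ne')
    have h2 : HasDerivAt (fun r : ℝ => r ^ (b - 1)) ((b - 1) * r ^ (b - 1 - 1)) r :=
      Real.hasDerivAt_rpow_const (Or.inl hr.ne')
    have := (((hasDerivAt_id r).add_const C).sub (h1.const_mul C)).sub h2
    exact this
  set f1 : ℝ → ℝ := fun r => 1 - C * (b * r ^ (b - 1)) - (b - 1) * r ^ (b - 1 - 1) with hf1
  have hd2 : ∀ r : ℝ, 0 < r → HasDerivAt f1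
      (0 - C * (b * ((b - 1) * r ^ (b - 1 - 1))) - (b - 1) * ((b - 1 - 1) * r ^ (b - 1 - 1 - 1))) r := by
    intro r hr
    have h1 : HasDerivAt (fun r : ℝ => r ^ (b - 1)) ((b - 1) * r ^ (b - 1 - 1)) r :=
      Real.hasDerivAt_rpow_const (Or.inl hr.ne')
    have h2 : HasDerivAt (fun r : ℝ => r ^ (b - 1 - 1)) ((b - 1 - 1) * r ^ (b - 1 - 1 - 1)) r :=
      Real.hasDerivAt_rpow_const (Or.inl hr.ne')
    exact ((hasDerivAt_const r (1:ℝ)).sub ((h1.const_mul b).const_mul C)).sub (h2.const_mul (b-1))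
  have hderiv_eq : Set.EqOn (deriv f) f1 (Set.Ioi (0:ℝ)) := fun r hr => (hd1 r hr).deriv
  have scvx : StrictConvexOn ℝ (Set.Ici (1:ℝ)) f := by
    apply strictConvexOn_of_deriv2_pos (convex_Ici 1)
    · intro r hr
      have hr0 : (r:ℝ) ≠ 0 := by simp only [Set.mem_Ici] at hr; positivity
      have c1 : ContinuousAt (fun r : ℝ => r ^ b) r :=
        Real.continuousAt_rpow_const r b (Or.inl hr0)
      have c2 : ContinuousAt (fun r : ℝ => r ^ (b - 1)) r :=
        Real.continuousAt_rpow_const r (b - 1) (Or.inl hr0)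
      exact (((continuousAt_id.add continuousAt_const).sub (c1.const_mul C)).sub c2).continuousWithinAt
    · intro r hr
      rw [interior_Ici] at hr
      have hr1 : 1 < r := hr
      have hr0 : (0:ℝ) < r := by linarith
      have e1 : deriv^[2] f r = deriv f1 r := by
        simp only [Function.iterate_succ, Function.iterate_zero, Function.comp]
        apply Filter.EventuallyEq.deriv_eq
        filter_upwards [Ioi_mem_nhds hr0] with s hs
        exact hderiv_eq hs
      rw [e1, (hd2 r hr0).deriv]
      have hpow : r ^ (b - 1 - 1) = r ^ (b - 1 - 1 - 1) * r := by
        have h' := Real.rpow_sub hr0 (b - 1 - 1) 1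
        rw [Real.rpow_one] at h'
        rw [h']
        field_simp
      have hp3 : 0 < r ^ (b - 1 - 1 - 1) := Real.rpow_pos_of_pos hr0 _
      rw [hpow]
      have hCr : 2 - b < C * b * r := by nlinarith
      have key : (0:ℝ) < (1 - b) * (r ^ (b - 1 - 1 - 1) * (C * b * r - (2 - b))) :=
        mul_pos (by linarith) (mul_pos hp3 (by linarith))
      nlinarith [key]
  have hfa : f a = 0 := h0
  have hfa' : f a' = 0 := h0'
  have hf1zero : f 1 = 0 := by simp [hf, Real.one_rpow]
  rcases lt_trichotomy a a' with hlt | heq | hgt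
  · exfalso
    have h1 : a' - 1 ≠ 0 := sub_ne_zero.mpr (ne_of_gt ha')
    have ht : (0:ℝ) < (a' - a)/(a' - 1) := by apply div_pos <;> linarith
    have hs : (0:ℝ) < (a - 1)/(a' - 1) := by apply div_pos <;> linarith
    have hsum : (a' - a)/(a' - 1) + (a - 1)/(a' - 1) = 1 := by
      rw [← add_div, show a' - a + (a - 1) = a' - 1 by ring]
      exact div_self h1
    have hne : (1:ℝ) ≠ a' := by linarith
    have hcc := scvx.2 (Set.self_mem_Ici) (Set.mem_Ici.mpr ha'.le) hne ht hs hsum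
    rw [smul_eq_mul, smul_eq_mul, smul_eq_mul, smul_eq_mul] at hcc
    have hcomb : (a' - a)/(a' - 1) * 1 + (a - 1)/(a' - 1) * a' = a := by
      rw [mul_one, div_mul_eq_mul_div, ← add_div,
        show a' - a + (a - 1) * a' = a * (a' - 1) by ring, mul_div_assoc, div_self h1, mul_one]
    rw [hcomb, hf1zero, hfa, hfa'] at hcc
    simp at hcc
  · exact heq
  · exfalso
    have h1 : a - 1 ≠ 0 := sub_ne_zero.mpr (ne_of_gt ha)
    have ht : (0:ℝ) < (a - a')/(a - 1) := by apply div_pos <;> linarith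
    have hs : (0:ℝ) < (a' - 1)/(a - 1) := by apply div_pos <;> linarith
    have hsum : (a - a')/(a - 1) + (a' - 1)/(a - 1) = 1 := by
      rw [← add_div, show a - a' + (a' - 1) = a - 1 by ring]
      exact div_self h1
    have hne : (1:ℝ) ≠ a := by linarith
    have hcc := scvx.2 (Set.self_mem_Ici) (Set.mem_Ici.mpr ha.le) hne ht hs hsum
    rw [smul_eq_mul, smul_eq_mul, smul_eq_mul, smul_eq_mul] at hcc
    have hcomb : (a - a')/(a - 1) * 1 + (a' - 1)/(a - 1) * a = a' := by
      rw [mul_one, div_mul_eq_mul_div, ← add_div,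
        show a - a' + (a' - 1) * a = a' * (a - 1) by ring, mul_div_assoc, div_self h1, mul_one]
    rw [hcomb, hf1zero, hfa, hfa'] at hcc
    simp at hcc

/-- From relation R(x) to the root equation for ω at a = x/(1-x). -/
private lemma R_to_omega {b K x : ℝ} (hb0 : 0 < b) (hx1 : 1/2 < x) (hx2 : x < 1)
    (hR : x ^ b * (1 - x) * (1 + K * x) = (1 - x) ^ b * x * (1 + K * (1 - x))) :
    x/(1-x) + (K+1) - (K+1) * (x/(1-x)) ^ b - (x/(1-x)) ^ (b-1) = 0 := by
  have hx0 : (0:ℝ) < x := by linarith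
  have h1x : (0:ℝ) < 1 - x := by linarith
  have hs : (0:ℝ) < x ^ b := Real.rpow_pos_of_pos hx0 b
  have hu : (0:ℝ) < (1 - x) ^ b := Real.rpow_pos_of_pos h1x b
  have ha0 : (0:ℝ) < x/(1-x) := div_pos hx0 h1x
  have hab : (x/(1-x)) ^ b = x ^ b / (1 - x) ^ b := Real.div_rpow hx0.le h1x.le b
  have hab1 : (x/(1-x)) ^ (b-1) = (x ^ b / (1 - x) ^ b) / (x/(1-x)) := by
    rw [Real.rpow_sub ha0, Real.rpow_one, hab]
  rw [hab, hab1]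
  field_simp
  nlinarith [hR, hs, hu, hx0, h1x]

/-- From `g x b = K` (for `x ∈ (1/2,1)`, `0 < b < 1`) to the relation R(x). -/
private lemma g_to_R {b K x : ℝ} (hb0 : 0 < b) (hb1 : b < 1) (hx1 : 1/2 < x) (hx2 : x < 1)
    (hg : g x b = K) :
    x ^ b * (1 - x) * (1 + K * x) = (1 - x) ^ b * x * (1 + K * (1 - x)) := by
  have hx0 : (0:ℝ) < x := by linarith
  have h1x : (0:ℝ) < 1 - x := by linarith
  have hs : (0:ℝ) < x ^ b := Real.rpow_pos_of_pos hx0 b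
  have hu : (0:ℝ) < (1 - x) ^ b := Real.rpow_pos_of_pos h1x b
  have hxp : x ^ (1 - b) = x / x ^ b := by
    rw [Real.rpow_sub hx0, Real.rpow_one]
  have h1xp : (1 - x) ^ (1 - b) = (1 - x) / (1 - x) ^ b := by
    rw [Real.rpow_sub h1x, Real.rpow_one]
  have hne : x ≠ 1/2 := by linarith
  rw [g, if_neg hne, hxp, h1xp] at hg
  have hub : (1 - x) ^ b < x ^ b := Real.rpow_lt_rpow h1x.le (by linarith) hb0
  have hform : x * ((1 - x) / (1 - x) ^ b) - (1 - x) * (x / x ^ b)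
      = x * (1 - x) * (x ^ b - (1 - x) ^ b) / ((1 - x) ^ b * x ^ b) := by
    field_simp
  have hdenpos : 0 < x * ((1 - x) / (1 - x) ^ b) - (1 - x) * (x / x ^ b) := by
    rw [hform]
    apply div_pos
    · apply mul_pos (mul_pos hx0 h1x)
      linarith
    · exact mul_pos hu hs
  have heq := (div_eq_iff (ne_of_gt hdenpos)).mp hg
  have heq' : x * (1 - x) ^ b - (1 - x) * x ^ b
      = K * (x * (1 - x) * x ^ b - (1 - x) * x * (1 - x) ^ b) := by
    field_simp at heq
    have h2 : (x * (1 - x) ^ b - (1 - x) * x ^ b) * ((1 - x) ^ b * x ^ b)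
        = (K * (x * (1 - x) * x ^ b - (1 - x) * x * (1 - x) ^ b)) * ((1 - x) ^ b * x ^ b) := by
      linear_combination ((1 - x) ^ b * x ^ b) * heq
    exact mul_right_cancel₀ (ne_of_gt (mul_pos hu hs)) h2
  linear_combination -heq'

private lemma F_mono {h b x1 y1 x2 y2 : ℝ} (hh : 1 < h) (hb : 0 < b)
    (hx1 : 0 < x1) (hx2 : x2 < 1) (hy1 : 0 ≤ y1) (hy2 : y2 ≤ 1)
    (hx : x1 ≤ x2) (hy : y1 ≤ y2) :
    x1 ^ b * A h y1 / (x1 ^ b * A h y1 + (1 - x1) ^ b * B h y1) ≤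
    x2 ^ b * A h y2 / (x2 ^ b * A h y2 + (1 - x2) ^ b * B h y2) := by
  have hx1' : x1 < 1 := lt_of_le_of_lt hx hx2
  have hx2' : 0 < x2 := lt_of_lt_of_le hx1 hx
  have hy1' : y1 ≤ 1 := le_trans hy hy2
  have hy2' : 0 ≤ y2 := le_trans hy1 hy
  have hA1 : 0 < A h y1 := by unfold A; nlinarith
  have hA2 : 0 < A h y2 := by unfold A; nlinarith
  have hB1 : 0 < B h y1 := by unfold B; nlinarith
  have hB2 : 0 < B h y2 := by unfold B; nlinarith
  have key : ∀ x y : ℝ, 0 < x → x < 1 → 0 < A h y → 0 < B h y →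
      x ^ b * A h y / (x ^ b * A h y + (1 - x) ^ b * B h y)
        = 1 / (1 + ((1 - x)/x) ^ b * (B h y / A h y)) := by
    intro x y hx0 hxlt hA hB
    have h1x : (0:ℝ) < 1 - x := by linarith
    have hs : (0:ℝ) < x ^ b := Real.rpow_pos_of_pos hx0 b
    have hu : (0:ℝ) < (1 - x) ^ b := Real.rpow_pos_of_pos h1x b
    rw [Real.div_rpow h1x.le hx0.le]
    rw [div_eq_div_iff]
    · field_simp
    · positivity
    · have : (0:ℝ) ≤ (1 - x) ^ b / x ^ b * (B h y / A h y) :=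
        mul_nonneg (div_nonneg hu.le hs.le) (div_nonneg hB.le hA.le)
      linarith
  rw [key x1 y1 hx1 hx1' hA1 hB1, key x2 y2 hx2' hx2 hA2 hB2]
  have hs2 : (0:ℝ) ≤ ((1 - x2)/x2) ^ b * (B h y2 / A h y2) :=
    mul_nonneg (Real.rpow_nonneg (div_nonneg (by linarith) hx2'.le) b) (div_nonneg hB2.le hA2.le)
  apply one_div_le_one_div_of_le
  · linarith
  have hmono : ((1 - x2)/x2) ^ b * (B h y2 / A h y2) ≤ ((1 - x1)/x1) ^ b * (B h y1 / A h y1) := by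
    apply mul_le_mul
    · apply Real.rpow_le_rpow (div_nonneg (by linarith) hx2'.le) _ hb.le
      apply div_le_div₀ (by linarith) (by linarith) hx1 hx
    · apply div_le_div₀ hB1.le _ hA1 _
      · unfold B; nlinarith
      · unfold A; nlinarith
    · exact div_nonneg hB2.le hA2.le
    · exact Real.rpow_nonneg (div_nonneg (by linarith) hx1.le) b
  linarith

set_option maxHeartbeats 2000000 in
/-- Lemma 5 of the paper (moderate bias): if the implicit opinion stays in
`[x̂(φ,h,b), x̂(1,h,b))` from some time `T` on, then `x` and `y` are eventually
monotone and converge to `x̂(φ,h,b)` and `(φ(h+1)x̂+1-φ)/(φh+2-φ)`. -/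
theorem stmt_11 (h φ b : ℝ) (x y : ℕ → ℝ) (xhatφ xhat1 : ℝ)
    (hh : 1 < h) (hφ : 0 < φ ∧ φ < 1)
    (hx0 : 1 / 2 < x 0 ∧ x 0 < 1) (hy0 : 1 / 2 ≤ y 0 ∧ y 0 ≤ x 0)
    (hxupd : ∀ t : ℕ, x (t + 1) =
      (x t) ^ b * A h (y t) / ((x t) ^ b * A h (y t) + (1 - x t) ^ b * B h (y t)))
    (hyupd : ∀ t : ℕ, y (t + 1) = φ * x (t + 1) + (1 - φ) * (A h (y t) / (h + 1)))
    (hb : 2 / (φ * (h - 1) + 2) < b ∧ b < 1)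
    (hxhatφ : xhatφ ∈ Set.Ioo (1 / 2 : ℝ) 1 ∧ g xhatφ b = φ * (h - 1))
    (hxhat1 : xhat1 ∈ Set.Ioo (1 / 2 : ℝ) 1 ∧ g xhat1 b = h - 1)
    (T : ℕ) (hT : 0 < T)
    (hbound : ∀ t : ℕ, T ≤ t → xhatφ ≤ x t ∧ x t < xhat1) :
    (∃ 𝒯 : ℕ, T < 𝒯 ∧
      ((∀ t : ℕ, 𝒯 ≤ t → x t ≤ x (t + 1)) ∨ (∀ t : ℕ, 𝒯 ≤ t → x (t + 1) ≤ x t)) ∧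
      ((∀ t : ℕ, 𝒯 ≤ t → y t ≤ y (t + 1)) ∨ (∀ t : ℕ, 𝒯 ≤ t → y (t + 1) ≤ y t))) ∧
    Filter.Tendsto x Filter.atTop (nhds xhatφ) ∧
    Filter.Tendsto y Filter.atTop
      (nhds ((φ * (h + 1) * xhatφ + 1 - φ) / (φ * h + 2 - φ))) := by
  obtain ⟨hφ0, hφ1⟩ := hφ
  obtain ⟨hx01, hx02⟩ := hx0
  obtain ⟨hy01, hy02⟩ := hy0
  obtain ⟨hbl, hbu⟩ := hb
  obtain ⟨⟨hxφ1, hxφ2⟩, hgφ⟩ := hxhatφ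
  obtain ⟨⟨hx11, hx12⟩, hg1⟩ := hxhat1
  have hK2 : (0:ℝ) < φ * (h - 1) + 2 := by nlinarith
  have hb0 : 0 < b := by
    have h2 : (0:ℝ) < 2 / (φ * (h - 1) + 2) := by positivity
    linarith
  -- state invariance
  have state : ∀ t, (0 < x t ∧ x t < 1) ∧ (0 < y t ∧ y t < 1) := by
    intro t
    induction t with
    | zero => exact ⟨⟨by linarith, hx02⟩, ⟨by linarith, by linarith⟩⟩
    | succ n ih =>
      obtain ⟨⟨hxn0, hxn1⟩, hyn0, hyn1⟩ := ih
      have hA : 0 < A h (y n) := by unfold A; nlinarith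
      have hB : 0 < B h (y n) := by unfold B; nlinarith
      have hs : 0 < (x n) ^ b := Real.rpow_pos_of_pos hxn0 b
      have hu : 0 < (1 - x n) ^ b := Real.rpow_pos_of_pos (by linarith) b
      have hnum : 0 < (x n) ^ b * A h (y n) := mul_pos hs hA
      have hden : 0 < (x n) ^ b * A h (y n) + (1 - x n) ^ b * B h (y n) :=
        add_pos hnum (mul_pos hu hB)
      have hx1 : 0 < x (n + 1) := by rw [hxupd n]; exact div_pos hnum hden
      have hx2 : x (n + 1) < 1 := by
        rw [hxupd n, div_lt_one hden]
        have := mul_pos hu hB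
        linarith
      refine ⟨⟨hx1, hx2⟩, ?_, ?_⟩
      · rw [hyupd n]
        have h3 : 0 < A h (y n) / (h + 1) := div_pos hA (by linarith)
        have h4 := mul_pos hφ0 hx1
        have h5 := mul_pos (show (0:ℝ) < 1 - φ by linarith) h3
        linarith
      · rw [hyupd n]
        have h3 : A h (y n) / (h + 1) < 1 := by
          rw [div_lt_one (by linarith)]; unfold A; nlinarith
        have h4 : φ * x (n + 1) < φ * 1 := by
          exact mul_lt_mul_of_pos_left hx2 hφ0
        have h5 : (1 - φ) * (A h (y n) / (h + 1)) < (1 - φ) * 1 :=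
          mul_lt_mul_of_pos_left h3 (by linarith)
        linarith
  -- delta relation for y
  have dyrel : ∀ t : ℕ, y (t + 1 + 1) - y (t + 1) =
      φ * (x (t + 1 + 1) - x (t + 1)) + ((1 - φ) * (h - 1) / (h + 1)) * (y (t + 1) - y t) := by
    intro t
    rw [hyupd (t + 1), hyupd t]
    unfold A
    field_simp
    ring
  have hq : 0 < (1 - φ) * (h - 1) / (h + 1) := by
    apply div_pos (by nlinarith) (by linarith)
  -- propagation lemmas
  have prop_up : ∀ t, x t ≤ x (t + 1) → y t ≤ y (t + 1) →
      x (t + 1) ≤ x (t + 1 + 1) ∧ y (t + 1) ≤ y (t + 1 + 1) := by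
    intro t hxm hym
    have h1 : x (t + 1) ≤ x (t + 1 + 1) := by
      rw [hxupd t, hxupd (t + 1)]
      exact F_mono hh hb0 (state t).1.1 (state (t + 1)).1.2 (state t).2.1.le
        (state (t + 1)).2.2.le hxm hym
    refine ⟨h1, ?_⟩
    have hd := dyrel t
    have e1 : 0 ≤ φ * (x (t + 1 + 1) - x (t + 1)) := mul_nonneg hφ0.le (by linarith)
    have e2 : 0 ≤ ((1 - φ) * (h - 1) / (h + 1)) * (y (t + 1) - y t) :=
      mul_nonneg hq.le (by linarith)
    linarith
  have prop_dn : ∀ t, x (t + 1) ≤ x t → y (t + 1) ≤ y t →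
      x (t + 1 + 1) ≤ x (t + 1) ∧ y (t + 1 + 1) ≤ y (t + 1) := by
    intro t hxm hym
    have h1 : x (t + 1 + 1) ≤ x (t + 1) := by
      rw [hxupd t, hxupd (t + 1)]
      exact F_mono hh hb0 (state (t + 1)).1.1 (state t).1.2 (state (t + 1)).2.1.le
        (state t).2.2.le hxm hym
    refine ⟨h1, ?_⟩
    have hd := dyrel t
    have e1 : φ * (x (t + 1 + 1) - x (t + 1)) ≤ 0 :=
      mul_nonpos_of_nonneg_of_nonpos hφ0.le (by linarith)
    have e2 : ((1 - φ) * (h - 1) / (h + 1)) * (y (t + 1) - y t) ≤ 0 :=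
      mul_nonpos_of_nonneg_of_nonpos hq.le (by linarith)
    linarith
  -- main monotonicity
  have main : ∃ 𝒯 : ℕ, T < 𝒯 ∧
      ((∀ t : ℕ, 𝒯 ≤ t → x t ≤ x (t + 1)) ∨ (∀ t : ℕ, 𝒯 ≤ t → x (t + 1) ≤ x t)) ∧
      ((∀ t : ℕ, 𝒯 ≤ t → y t ≤ y (t + 1)) ∨ (∀ t : ℕ, 𝒯 ≤ t → y (t + 1) ≤ y t)) := by
    by_cases hal : ∃ t1, T + 1 ≤ t1 ∧
        ((x t1 ≤ x (t1 + 1) ∧ y t1 ≤ y (t1 + 1)) ∨ (x (t1 + 1) ≤ x t1 ∧ y (t1 + 1) ≤ y t1))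
    · obtain ⟨t1, ht1, hcase⟩ := hal
      rcases hcase with hup | hdn
      · have key : ∀ n, x (t1 + n) ≤ x (t1 + n + 1) ∧ y (t1 + n) ≤ y (t1 + n + 1) := by
          intro n
          induction n with
          | zero => exact hup
          | succ m ih => exact prop_up (t1 + m) ih.1 ih.2
        refine ⟨t1, by omega, Or.inl ?_, Or.inl ?_⟩ <;>
        · intro t ht
          obtain ⟨n, rfl⟩ := Nat.exists_eq_add_of_le ht
          first
          | exact (key n).1
          | exact (key n).2
      · have key : ∀ n, x (t1 + n + 1) ≤ x (t1 + n) ∧ y (t1 + n + 1) ≤ y (t1 + n) := by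
          intro n
          induction n with
          | zero => exact hdn
          | succ m ih => exact prop_dn (t1 + m) ih.1 ih.2
        refine ⟨t1, by omega, Or.inr ?_, Or.inr ?_⟩ <;>
        · intro t ht
          obtain ⟨n, rfl⟩ := Nat.exists_eq_add_of_le ht
          first
          | exact (key n).1
          | exact (key n).2
    · push_neg at hal
      have hmix : ∀ t, T + 1 ≤ t →
          (x t < x (t + 1) ∧ y (t + 1) < y t) ∨ (x (t + 1) < x t ∧ y t < y (t + 1)) := by
        intro t ht
        obtain ⟨h1, h2⟩ := hal t ht
        rcases lt_trichotomy (x t) (x (t + 1)) with hlt | heq | hgt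
        · exact Or.inl ⟨hlt, h1 hlt.le⟩
        · exact absurd (h2 heq.ge) (not_lt.mpr (h1 heq.le).le)
        · exact Or.inr ⟨hgt, h2 hgt.le⟩
      rcases hmix (T + 1) le_rfl with hpos | hneg
      · have key : ∀ n, x (T + 1 + n) < x (T + 1 + n + 1) ∧ y (T + 1 + n + 1) < y (T + 1 + n) := by
          intro n
          induction n with
          | zero => exact hpos
          | succ m ih =>
            rcases hmix (T + 1 + m + 1) (by omega) with h' | h'
            · exact h'
            · exfalso
              have hd := dyrel (T + 1 + m)
              have e1 : φ * (x (T + 1 + m + 1 + 1) - x (T + 1 + m + 1)) ≤ 0 :=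
                mul_nonpos_of_nonneg_of_nonpos hφ0.le (by linarith [h'.1])
              have e2 : ((1 - φ) * (h - 1) / (h + 1)) * (y (T + 1 + m + 1) - y (T + 1 + m)) < 0 :=
                mul_neg_of_pos_of_neg hq (by linarith [ih.2])
              linarith [h'.2]
        refine ⟨T + 1, by omega, Or.inl ?_, Or.inr ?_⟩ <;>
        · intro t ht
          obtain ⟨n, rfl⟩ := Nat.exists_eq_add_of_le ht
          first
          | exact (key n).1.le
          | exact (key n).2.le
      · have key : ∀ n, x (T + 1 + n + 1) < x (T + 1 + n) ∧ y (T + 1 + n) < y (T + 1 + n + 1) := by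
          intro n
          induction n with
          | zero => exact hneg
          | succ m ih =>
            rcases hmix (T + 1 + m + 1) (by omega) with h' | h'
            · exfalso
              have hd := dyrel (T + 1 + m)
              have e1 : 0 ≤ φ * (x (T + 1 + m + 1 + 1) - x (T + 1 + m + 1)) :=
                mul_nonneg hφ0.le (by linarith [h'.1])
              have e2 : 0 < ((1 - φ) * (h - 1) / (h + 1)) * (y (T + 1 + m + 1) - y (T + 1 + m)) :=
                mul_pos hq (by linarith [ih.2])
              linarith [h'.2]
            · exact h'
        refine ⟨T + 1, by omega, Or.inr ?_, Or.inl ?_⟩ <;>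
        · intro t ht
          obtain ⟨n, rfl⟩ := Nat.exists_eq_add_of_le ht
          first
          | exact (key n).1.le
          | exact (key n).2.le
  obtain ⟨𝒯, h𝒯, hxmono, hymono⟩ := main
  refine ⟨⟨𝒯, h𝒯, hxmono, hymono⟩, ?_⟩
  -- convergence of x
  have hxconv : ∃ xb : ℝ, Tendsto x atTop (𝓝 xb) := by
    rcases hxmono with hup | hdn
    · have hm : Monotone (fun n => x (n + 𝒯)) := by
        apply monotone_nat_of_le_succ
        intro n
        have e : n + 1 + 𝒯 = n + 𝒯 + 1 := by omega
        have := hup (n + 𝒯) (by omega)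
        simpa [e] using this
      have hbdd : BddAbove (Set.range (fun n => x (n + 𝒯))) := by
        refine ⟨xhat1, ?_⟩
        rintro z ⟨n, rfl⟩
        exact (hbound (n + 𝒯) (by omega)).2.le
      exact ⟨_, (tendsto_add_atTop_iff_nat 𝒯).mp (tendsto_atTop_ciSup hm hbdd)⟩
    · have hm : Antitone (fun n => x (n + 𝒯)) := by
        apply antitone_nat_of_succ_le
        intro n
        have e : n + 1 + 𝒯 = n + 𝒯 + 1 := by omega
        have := hdn (n + 𝒯) (by omega)
        simpa [e] using this
      have hbdd : BddBelow (Set.range (fun n => x (n + 𝒯))) := by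
        refine ⟨xhatφ, ?_⟩
        rintro z ⟨n, rfl⟩
        exact (hbound (n + 𝒯) (by omega)).1
      exact ⟨_, (tendsto_add_atTop_iff_nat 𝒯).mp (tendsto_atTop_ciInf hm hbdd)⟩
  obtain ⟨xbar, hxbar⟩ := hxconv
  have hyconv : ∃ yb : ℝ, Tendsto y atTop (𝓝 yb) := by
    rcases hymono with hup | hdn
    · have hm : Monotone (fun n => y (n + 𝒯)) := by
        apply monotone_nat_of_le_succ
        intro n
        have e : n + 1 + 𝒯 = n + 𝒯 + 1 := by omega
        have := hup (n + 𝒯) (by omega)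
        simpa [e] using this
      have hbdd : BddAbove (Set.range (fun n => y (n + 𝒯))) := by
        refine ⟨1, ?_⟩
        rintro z ⟨n, rfl⟩
        exact (state (n + 𝒯)).2.2.le
      exact ⟨_, (tendsto_add_atTop_iff_nat 𝒯).mp (tendsto_atTop_ciSup hm hbdd)⟩
    · have hm : Antitone (fun n => y (n + 𝒯)) := by
        apply antitone_nat_of_succ_le
        intro n
        have e : n + 1 + 𝒯 = n + 𝒯 + 1 := by omega
        have := hdn (n + 𝒯) (by omega)
        simpa [e] using this
      have hbdd : BddBelow (Set.range (fun n => y (n + 𝒯))) := by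
        refine ⟨0, ?_⟩
        rintro z ⟨n, rfl⟩
        exact (state (n + 𝒯)).2.1.le
      exact ⟨_, (tendsto_add_atTop_iff_nat 𝒯).mp (tendsto_atTop_ciInf hm hbdd)⟩
  obtain ⟨ybar, hybar⟩ := hyconv
  -- bounds on limits
  have hxbar_lb : xhatφ ≤ xbar :=
    ge_of_tendsto hxbar (eventually_atTop.mpr ⟨T, fun t ht => (hbound t ht).1⟩)
  have hxbar_ub : xbar ≤ xhat1 :=
    le_of_tendsto hxbar (eventually_atTop.mpr ⟨T, fun t ht => (hbound t ht).2.le⟩)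
  have hybar0 : 0 ≤ ybar :=
    ge_of_tendsto hybar (eventually_atTop.mpr ⟨0, fun t _ => (state t).2.1.le⟩)
  have hybar1 : ybar ≤ 1 :=
    le_of_tendsto hybar (eventually_atTop.mpr ⟨0, fun t _ => (state t).2.2.le⟩)
  have hxbar0 : (1:ℝ)/2 < xbar := lt_of_lt_of_le hxφ1 hxbar_lb
  have hxbar1 : xbar < 1 := lt_of_le_of_lt hxbar_ub hx12
  -- limit equations
  have tA : Tendsto (fun t => A h (y t)) atTop (𝓝 (A h ybar)) := by
    simp only [A]
    exact ((hybar.const_mul h).add_const 1).sub hybar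
  have tB : Tendsto (fun t => B h (y t)) atTop (𝓝 (B h ybar)) := by
    simp only [B]
    exact hybar.add ((tendsto_const_nhds.sub hybar).const_mul h)
  have hAbar : 0 < A h ybar := by unfold A; nlinarith
  have hBbar : 0 < B h ybar := by unfold B; nlinarith
  have hsbar : 0 < xbar ^ b := Real.rpow_pos_of_pos (by linarith) b
  have hubar : 0 < (1 - xbar) ^ b := Real.rpow_pos_of_pos (by linarith) b
  have hdenbar : 0 < xbar ^ b * A h ybar + (1 - xbar) ^ b * B h ybar :=
    add_pos (mul_pos hsbar hAbar) (mul_pos hubar hBbar)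
  have hshiftx : Tendsto (fun t => x (t + 1)) atTop (𝓝 xbar) :=
    (tendsto_add_atTop_iff_nat 1).mpr hxbar
  have hshifty : Tendsto (fun t => y (t + 1)) atTop (𝓝 ybar) :=
    (tendsto_add_atTop_iff_nat 1).mpr hybar
  have hxfix : xbar = xbar ^ b * A h ybar / (xbar ^ b * A h ybar + (1 - xbar) ^ b * B h ybar) := by
    have tnum : Tendsto (fun t => (x t) ^ b * A h (y t)) atTop (𝓝 (xbar ^ b * A h ybar)) :=
      (hxbar.rpow_const (Or.inl (by linarith : xbar ≠ 0))).mul tA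
    have tden : Tendsto (fun t => (x t) ^ b * A h (y t) + (1 - x t) ^ b * B h (y t)) atTop
        (𝓝 (xbar ^ b * A h ybar + (1 - xbar) ^ b * B h ybar)) :=
      tnum.add (((tendsto_const_nhds.sub hxbar).rpow_const
        (Or.inl (by linarith : 1 - xbar ≠ 0))).mul tB)
    have tfrac : Tendsto (fun t => (x t) ^ b * A h (y t) /
        ((x t) ^ b * A h (y t) + (1 - x t) ^ b * B h (y t))) atTop
        (𝓝 (xbar ^ b * A h ybar / (xbar ^ b * A h ybar + (1 - xbar) ^ b * B h ybar))) :=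
      tnum.div tden (ne_of_gt hdenbar)
    have h1 : Tendsto (fun t => (x t) ^ b * A h (y t) /
        ((x t) ^ b * A h (y t) + (1 - x t) ^ b * B h (y t))) atTop (𝓝 xbar) := by
      have heqf : (fun t => x (t + 1)) =
          fun t => (x t) ^ b * A h (y t) / ((x t) ^ b * A h (y t) + (1 - x t) ^ b * B h (y t)) :=
        funext hxupd
      rw [← heqf]
      exact hshiftx
    exact tendsto_nhds_unique h1 tfrac
  have hyfix : ybar = φ * xbar + (1 - φ) * (A h ybar / (h + 1)) := by
    have trhs : Tendsto (fun t => φ * x (t + 1) + (1 - φ) * (A h (y t) / (h + 1))) atTop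
        (𝓝 (φ * xbar + (1 - φ) * (A h ybar / (h + 1)))) :=
      (hshiftx.const_mul φ).add ((tA.div_const (h + 1)).const_mul (1 - φ))
    have heqf : (fun t => y (t + 1)) =
        fun t => φ * x (t + 1) + (1 - φ) * (A h (y t) / (h + 1)) := funext hyupd
    exact tendsto_nhds_unique (heqf ▸ hshifty) trhs
  -- algebra
  have hybar_eq : ybar * (φ * (h - 1) + 2) = φ * (h + 1) * xbar + 1 - φ := by
    have h1 : (h:ℝ) + 1 ≠ 0 := by linarith
    have h2 : ybar * (h + 1) = (φ * xbar + (1 - φ) * (A h ybar / (h + 1))) * (h + 1) := by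
      rw [← hyfix]
    rw [mul_comm] at h2
    unfold A at h2
    field_simp at h2
    linarith
  have hAB : A h ybar * (1 + φ * (h - 1) * (1 - xbar)) = B h ybar * (1 + φ * (h - 1) * xbar) := by
    unfold A B
    linear_combination (h - 1) * hybar_eq
  have hcross : xbar * (xbar ^ b * A h ybar + (1 - xbar) ^ b * B h ybar)
      = xbar ^ b * A h ybar := ((eq_div_iff (ne_of_gt hdenbar)).mp hxfix)
  have hR_xbar : xbar ^ b * (1 - xbar) * (1 + φ * (h - 1) * xbar)
      = (1 - xbar) ^ b * xbar * (1 + φ * (h - 1) * (1 - xbar)) := by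
    have h2 : xbar ^ b * (1 - xbar) * (1 + φ * (h - 1) * xbar) * A h ybar
        = (1 - xbar) ^ b * xbar * (1 + φ * (h - 1) * (1 - xbar)) * A h ybar := by
      linear_combination (-(1 + φ * (h - 1) * xbar)) * hcross
        - xbar * (1 - xbar) ^ b * hAB
    exact mul_right_cancel₀ (ne_of_gt hAbar) h2
  have hR_φ := g_to_R (K := φ * (h - 1)) hb0 hbu hxφ1 hxφ2 hgφ
  have hC : 2 - b < (φ * (h - 1) + 1) * b := by
    have := (div_lt_iff₀ hK2).mp hbl
    nlinarith
  have ha : 1 < xbar / (1 - xbar) := by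
    rw [lt_div_iff₀ (by linarith)]
    linarith
  have ha' : 1 < xhatφ / (1 - xhatφ) := by
    rw [lt_div_iff₀ (by linarith)]
    linarith
  have hω1 := R_to_omega (K := φ * (h - 1)) hb0 hxbar0 hxbar1 hR_xbar
  have hω2 := R_to_omega (K := φ * (h - 1)) hb0 hxφ1 hxφ2 hR_φ
  have haeq : xbar / (1 - xbar) = xhatφ / (1 - xhatφ) :=
    omega_unique hb0 hbu hC ha ha' hω1 hω2
  have hxx : xbar = xhatφ := by
    rw [div_eq_div_iff (by linarith) (by linarith)] at haeq
    nlinarith [haeq]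
  constructor
  · rw [← hxx]; exact hxbar
  · have hden2 : φ * h + 2 - φ ≠ 0 := by nlinarith
    have hyval : ybar = (φ * (h + 1) * xhatφ + 1 - φ) / (φ * h + 2 - φ) := by
      rw [eq_div_iff hden2, ← hxx]
      linear_combination hybar_eq
    rw [← hyval]
    exact hybar
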